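/- Let 0 < q < 1, μ > 0 with 0 < (1-q)μ < 1, and ρ(s) = C_q ((1-q)μ)^s/(q;q)_s with C_q = 1/e_q[(1-q)μ], where e_q(z) = ∑_{n≥0} z^n/(q;q)_n. Then the k-th q-moment u_k^q = ∑_{s≥0} [s]_q^(k) ρ(s) (x(s+1/2) - x(s-1/2)) equals (qμ)^k q^{-1/2} e_q[(1-q)qμ]/e_q[(1-q)μ] for every k ≥ 0. -/

import Mathlib

/-- The lattice `x(s) = (q^s - 1)/(q - 1)`. -/
noncomputable def qlat (q s : ℝ) : ℝ := (q ^ s - 1) / (q - 1)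

/-- The q-falling factorial `[s]_q^(k) = ∏_{j=0}^{k-1} x(s - j)`. -/
noncomputable def qfall (q s : ℝ) (k : ℕ) : ℝ := ∏ j ∈ Finset.range k, qlat q (s - j)

/-- The q-Pochhammer symbol `(a;q)_k`. -/
noncomputable def qPoch (a q : ℝ) (k : ℕ) : ℝ := ∏ j ∈ Finset.range k, (1 - a * q ^ j)

/-- The q-exponential `e_q(z) = ∑_{n ≥ 0} z^n/(q;q)_n`. -/
noncomputable def qExp (q z : ℝ) : ℝ := ∑' n : ℕ, z ^ n / qPoch q q n

lemma qPoch_pos {q : ℝ} (hq : 0 < q) (hq1 : q < 1) (n : ℕ) : 0 < qPoch q q n := by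
  apply Finset.prod_pos
  intro j _
  have h1 : q ^ j ≤ 1 := pow_le_one₀ hq.le hq1.le
  nlinarith

lemma qlat_natCast (q : ℝ) (m : ℕ) : qlat q (m : ℝ) = (q ^ m - 1) / (q - 1) := by
  unfold qlat; rw [Real.rpow_natCast]

lemma qfall_eq_zero {q : ℝ} {s k : ℕ} (h : s < k) : qfall q (s : ℝ) k = 0 := by
  unfold qfall
  apply Finset.prod_eq_zero (Finset.mem_range.mpr h)
  have : (s : ℝ) - (s : ℝ) = 0 := sub_self _
  rw [this]
  unfold qlat
  rw [Real.rpow_zero]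
  simp

lemma qfall_add {q : ℝ} (hq : 0 < q) (hq1 : q < 1) (k n : ℕ) :
    qfall q (↑(n + k)) k * ((1 - q) ^ k * qPoch q q n) = qPoch q q (n + k) := by
  induction k with
  | zero => simp [qfall]
  | succ k ih =>
    have hstep : qfall q (↑(n + (k + 1))) (k + 1)
        = qfall q (↑(n + k)) k * qlat q (↑(n + k + 1)) := by
      unfold qfall
      rw [Finset.prod_range_succ']
      congr 1
      · apply Finset.prod_congr rfl
        intro j _
        congr 1
        push_cast
        ring
      · congr 1
        push_cast
        ring
    have hlat : qlat q (↑(n + k + 1)) * (1 - q) = 1 - q * q ^ (n + k) := by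
      rw [qlat_natCast]
      have hne : q - 1 ≠ 0 := by linarith
      field_simp
      ring
    have hP : qPoch q q (n + (k + 1)) = qPoch q q (n + k) * (1 - q * q ^ (n + k)) := by
      have : n + (k + 1) = (n + k) + 1 := by ring
      rw [this]
      exact Finset.prod_range_succ _ _
    rw [hstep, hP, ← ih, ← hlat]
    ring

lemma qlat_diff {q : ℝ} (hq : 0 < q) (hq1 : q < 1) (s : ℕ) :
    qlat q ((s : ℝ) + 1 / 2) - qlat q ((s : ℝ) - 1 / 2)
      = q ^ s * q ^ (-(1 : ℝ) / 2) := by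
  unfold qlat
  have hne : q - 1 ≠ 0 := by linarith
  have key : q ^ ((s : ℝ) - 1 / 2) = q ^ s * q ^ (-(1 : ℝ) / 2) := by
    rw [← Real.rpow_natCast q s, ← Real.rpow_add hq]
    congr 1
    ring
  have key2 : q ^ ((s : ℝ) + 1 / 2) = q ^ ((s : ℝ) - 1 / 2) * q := by
    rw [show (s : ℝ) + 1 / 2 = ((s : ℝ) - 1 / 2) + 1 by ring, Real.rpow_add hq,
      Real.rpow_one]
  rw [div_sub_div_same, key2, key]
  field_simp
  ring

lemma summable_qexp {q : ℝ} (hq : 0 < q) (hq1 : q < 1) {z : ℝ} (hz0 : 0 ≤ z)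
    (hz1 : z < 1) : Summable (fun n : ℕ => z ^ n / qPoch q q n) := by
  have hr1 : (z + 1) / 2 < 1 := by linarith
  apply summable_of_ratio_norm_eventually_le hr1
  have hev : ∀ᶠ n : ℕ in Filter.atTop, q ^ n ≤ (1 - z) / 2 := by
    have := tendsto_pow_atTop_nhds_zero_of_lt_one hq.le hq1
    exact this.eventually (eventually_le_nhds (by linarith))
  filter_upwards [hev] with n hn
  have hPn := qPoch_pos hq hq1 n
  have hPn1 := qPoch_pos hq hq1 (n + 1)
  have hfac : qPoch q q (n + 1) = qPoch q q n * (1 - q * q ^ n) :=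
    Finset.prod_range_succ _ _
  have hqn : 0 < q ^ n := pow_pos hq n
  have hqf : 0 < 1 - q * q ^ n := by nlinarith
  have h0 : (0:ℝ) ≤ z ^ n / qPoch q q n := div_nonneg (pow_nonneg hz0 n) hPn.le
  have h1 : (0:ℝ) ≤ z ^ (n + 1) / qPoch q q (n + 1) :=
    div_nonneg (pow_nonneg hz0 _) hPn1.le
  rw [Real.norm_of_nonneg h1, Real.norm_of_nonneg h0, hfac]
  rw [div_le_iff₀ (by positivity), pow_succ]
  have hqq : q * q ^ n ≤ q ^ n := by nlinarith
  have hz' : z ≤ (z + 1) / 2 * (1 - q * q ^ n) := by nlinarith [sq_nonneg (1 - z)]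
  have : z ^ n * z ≤ z ^ n * ((z + 1) / 2 * (1 - q * q ^ n)) := by
    apply mul_le_mul_of_nonneg_left hz' (pow_nonneg hz0 n)
  calc z ^ n * z ≤ z ^ n * ((z + 1) / 2 * (1 - q * q ^ n)) := this
    _ = (z + 1) / 2 * (z ^ n / qPoch q q n) * (qPoch q q n * (1 - q * q ^ n)) := by
        field_simp

/-- q-Charlier moments: with `ρ(s) = C_q ((1-q)μ)^s/(q;q)_s`, `C_q = 1/e_q[(1-q)μ]`,
the `k`-th q-moment equals `(qμ)^k q^{-1/2} e_q[(1-q)qμ]/e_q[(1-q)μ]`. -/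
theorem qCharlier_moments (q μ : ℝ) (hq : 0 < q) (hq1 : q < 1) (hμ : 0 < μ)
    (h1 : 0 < (1 - q) * μ) (h2 : (1 - q) * μ < 1) (k : ℕ) :
    ∑' s : ℕ,
        qfall q s k *
          (1 / qExp q ((1 - q) * μ) * ((1 - q) * μ) ^ s / qPoch q q s) *
          (qlat q ((s : ℝ) + 1 / 2) - qlat q ((s : ℝ) - 1 / 2)) =
      (q * μ) ^ k * q ^ (-(1 : ℝ) / 2) * qExp q ((1 - q) * (q * μ)) /
        qExp q ((1 - q) * μ) := by
  set A := (1 - q) * μ with hA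
  set B := (1 - q) * (q * μ) with hB
  have hB0 : 0 < B := by rw [hB]; nlinarith
  have hB1 : B < 1 := by nlinarith
  have hEApos : 0 < qExp q A := by
    unfold qExp
    apply Summable.tsum_pos (summable_qexp hq hq1 h1.le h2)
      (fun n => div_nonneg (pow_nonneg h1.le n) (qPoch_pos hq hq1 n).le) 0
    simp [qPoch]
  have hEA : qExp q A ≠ 0 := ne_of_gt hEApos
  set f : ℕ → ℝ := fun s =>
    qfall q s k * (1 / qExp q A * A ^ s / qPoch q q s) *
      (qlat q ((s : ℝ) + 1 / 2) - qlat q ((s : ℝ) - 1 / 2)) with hf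
  set c : ℝ := q ^ (-(1 : ℝ) / 2) with hc
  have hterm : ∀ n : ℕ, f (n + k)
      = (1 / qExp q A * c * (q * μ) ^ k) * (B ^ n / qPoch q q n) := by
    intro n
    have hfa := qfall_add hq hq1 k n
    have hPn := (qPoch_pos hq hq1 n).ne'
    have hPnk := (qPoch_pos hq hq1 (n + k)).ne'
    have h1q : (1 - q) ≠ 0 := by linarith
    have hqfall : qfall q (↑(n + k)) k
        = qPoch q q (n + k) / ((1 - q) ^ k * qPoch q q n) := by
      rw [eq_div_iff (by positivity)]
      exact hfa
    have hAB : A * q = B := by rw [hA, hB]; ring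
    have hpow : A ^ (n + k) * q ^ (n + k) = (q * μ) ^ k * ((1 - q) ^ k * B ^ n) := by
      have e1 : A ^ (n + k) * q ^ (n + k) = (A * q) ^ n * (A * q) ^ k := by
        rw [← mul_pow, pow_add]
      have e3 : B ^ k = (1 - q) ^ k * (q * μ) ^ k := by rw [hB, mul_pow]
      rw [e1, hAB, e3]
      ring
    simp only [hf]
    rw [qlat_diff hq hq1, hqfall]
    have step : qPoch q q (n + k) / ((1 - q) ^ k * qPoch q q n) *
        (1 / qExp q A * A ^ (n + k) / qPoch q q (n + k)) * (q ^ (n + k) * c)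
        = (A ^ (n + k) * q ^ (n + k)) * (1 / qExp q A * c / ((1 - q) ^ k * qPoch q q n)) := by
      field_simp
    rw [step, hpow]
    have h1qk : ((1 : ℝ) - q) ^ k ≠ 0 := pow_ne_zero _ h1q
    field_simp
  have hgsum : Summable (fun n : ℕ => B ^ n / qPoch q q n) :=
    summable_qexp hq hq1 hB0.le hB1
  have hfsum : Summable f := by
    rw [← summable_nat_add_iff k]
    apply Summable.congr (hgsum.mul_left (1 / qExp q A * c * (q * μ) ^ k))
    intro n
    exact (hterm n).symm
  have hzero : ∀ s ∈ Finset.range k, f s = 0 := by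
    intro s hs
    simp only [hf]
    rw [qfall_eq_zero (Finset.mem_range.mp hs)]
    ring
  have hsplit := Summable.sum_add_tsum_nat_add k hfsum
  rw [Finset.sum_eq_zero hzero, zero_add] at hsplit
  rw [← hsplit]
  have : ∑' n : ℕ, f (n + k)
      = (1 / qExp q A * c * (q * μ) ^ k) * qExp q B := by
    rw [show qExp q B = ∑' n : ℕ, B ^ n / qPoch q q n from rfl, ← tsum_mul_left]
    exact tsum_congr hterm
  rw [this]
  field_simp
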